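/- For every real σ > 0 and every Y ∈ (1,2), the improper integral ∫₀^∞ (1 - exp(-σ·u^Y))/u² du converges and equals σ^(1/Y) · Γ(1 - 1/Y), where Γ is the real Gamma function. -/

import Mathlib

open MeasureTheory Set Filter

theorem stmt0 (σ Y : ℝ) (hσ : 0 < σ) (hY1 : 1 < Y) (hY2 : Y < 2) :
    IntegrableOn (fun u : ℝ => (1 - Real.exp (-σ * u ^ Y)) / u ^ 2) (Set.Ioi 0) ∧
    ∫ u in Set.Ioi (0 : ℝ), (1 - Real.exp (-σ * u ^ Y)) / u ^ 2
      = σ ^ (1/Y) * Real.Gamma (1 - 1/Y) := by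
  have hYpos : (0:ℝ) < Y := by linarith
  set f : ℝ → ℝ := fun u => (1 - Real.exp (-σ * u ^ Y)) / u ^ 2 with hfdef
  -- pointwise bounds
  have hexp_le_one : ∀ u : ℝ, 0 ≤ u → Real.exp (-σ * u ^ Y) ≤ 1 := by
    intro u hu
    rw [Real.exp_le_one_iff]
    have : 0 ≤ u ^ Y := Real.rpow_nonneg hu Y
    nlinarith
  have hone_sub_le : ∀ u : ℝ, 1 - Real.exp (-σ * u ^ Y) ≤ σ * u ^ Y := by
    intro u
    have := Real.add_one_le_exp (-σ * u ^ Y)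
    linarith
  have hfnonneg : ∀ u : ℝ, 0 < u → 0 ≤ f u := by
    intro u hu
    apply div_nonneg _ (by positivity)
    linarith [hexp_le_one u hu.le]
  have hsq : ∀ u : ℝ, 0 < u → (u:ℝ) ^ (2:ℕ) = u ^ (2:ℝ) := by
    intro u hu
    rw [← Real.rpow_natCast u 2]; norm_num
  have hbound1 : ∀ u : ℝ, 0 < u → f u ≤ σ * u ^ (Y - 2) := by
    intro u hu
    have h2 : u ^ Y = u ^ (Y - 2) * u ^ (2:ℝ) := by
      rw [← Real.rpow_add hu]; ring_nf
    have hu2 : (0:ℝ) < u ^ (2:ℕ) := by positivity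
    rw [hfdef]
    simp only
    rw [div_le_iff₀ hu2, hsq u hu]
    calc 1 - Real.exp (-σ * u ^ Y) ≤ σ * u ^ Y := hone_sub_le u
      _ = σ * u ^ (Y-2) * u ^ (2:ℝ) := by rw [h2]; ring
  have hbound2 : ∀ u : ℝ, 0 < u → f u ≤ u ^ (-2:ℝ) := by
    intro u hu
    have hu2 : (0:ℝ) < u ^ (2:ℕ) := by positivity
    rw [hfdef]
    simp only
    rw [div_le_iff₀ hu2]
    have : u ^ (-2:ℝ) * u ^ (2:ℕ) = 1 := by
      rw [hsq u hu, ← Real.rpow_add hu]; norm_num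
    rw [this]
    have := Real.exp_pos (-σ * u ^ Y)
    linarith
  -- measurability
  have hfcont : ContinuousOn f (Ioi (0:ℝ)) := by
    intro x hx
    have hx0 : (0:ℝ) < x := hx
    have h1 : ContinuousAt (fun u : ℝ => u ^ Y) x :=
      Real.continuousAt_rpow_const x Y (Or.inl (ne_of_gt hx0))
    have h2 : ContinuousAt (fun u : ℝ => 1 - Real.exp (-σ * u ^ Y)) x :=
      continuousAt_const.sub (Real.continuous_exp.continuousAt.comp (h1.const_mul (-σ)))
    exact (h2.div ((continuousAt_id.pow 2)) (pow_ne_zero 2 (ne_of_gt hx0))).continuousWithinAt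
  have hfmeas : AEStronglyMeasurable f (volume.restrict (Ioi (0:ℝ))) :=
    hfcont.aestronglyMeasurable measurableSet_Ioi
  -- integrability near 0
  have hint1 : IntegrableOn f (Ioc 0 1) := by
    have hg1 : IntegrableOn (fun u : ℝ => σ * u ^ (Y-2)) (Ioc 0 1) := by
      refine Integrable.const_mul ?_ σ
      exact ((intervalIntegral.integrableOn_Ioo_rpow_iff zero_lt_two).2 (by linarith)).mono_set
        (Set.Ioc_subset_Ioo_right one_lt_two)
    refine MeasureTheory.Integrable.mono hg1 ((hfcont.mono Set.Ioc_subset_Ioi_self).aestronglyMeasurable measurableSet_Ioc) ?_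
    refine (ae_restrict_iff' measurableSet_Ioc).2 (Filter.Eventually.of_forall fun u hu => ?_)
    have hu0 : (0:ℝ) < u := hu.1
    rw [Real.norm_eq_abs, Real.norm_eq_abs, abs_of_nonneg (hfnonneg u hu0),
      abs_of_nonneg (by positivity)]
    exact hbound1 u hu0
  have hint2 : IntegrableOn f (Ioi 1) := by
    have hg2 : IntegrableOn (fun u : ℝ => u ^ (-2:ℝ)) (Ioi 1) :=
      integrableOn_Ioi_rpow_of_lt (by norm_num) zero_lt_one
    refine MeasureTheory.Integrable.mono hg2 ((hfcont.mono (Set.Ioi_subset_Ioi zero_le_one)).aestronglyMeasurable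
      measurableSet_Ioi) ?_
    refine (ae_restrict_iff' measurableSet_Ioi).2 (Filter.Eventually.of_forall fun u hu => ?_)
    have hu0 : (0:ℝ) < u := lt_trans one_pos hu
    rw [Real.norm_eq_abs, Real.norm_eq_abs, abs_of_nonneg (hfnonneg u hu0),
      abs_of_nonneg (by positivity)]
    exact hbound2 u hu0
  have h_int : IntegrableOn f (Ioi 0) := by
    rw [← Set.Ioc_union_Ioi_eq_Ioi (zero_le_one)]
    exact hint1.union hint2
  -- the known Gamma-type integral
  have hI2int : IntegrableOn (fun u : ℝ => u ^ (Y-2) * Real.exp (-σ * u ^ Y)) (Ioi 0) :=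
    integrableOn_rpow_mul_exp_neg_mul_rpow (by linarith) hYpos hσ
  have hval : ∫ u in Ioi (0:ℝ), u ^ (Y-2) * Real.exp (-σ * u ^ Y)
      = σ ^ (-(Y-2+1)/Y) * (1/Y) * Real.Gamma ((Y-2+1)/Y) :=
    integral_rpow_mul_exp_neg_mul_rpow hYpos (by linarith) hσ
  -- integration by parts function
  set g : ℝ → ℝ := fun u => Real.exp (-σ * u ^ Y) with hgdef
  set F : ℝ → ℝ := fun u => (g u - 1) / u with hFdef
  have hF0 : F 0 = 0 := by
    simp [hFdef, hgdef, Real.zero_rpow (ne_of_gt hYpos)]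
  have hFderiv : ∀ u ∈ Ioi (0:ℝ), HasDerivAt F
      (f u - σ * Y * (u ^ (Y-2) * g u)) u := by
    intro u hu
    have hu0 : (0:ℝ) < u := hu
    have h1 : HasDerivAt (fun u : ℝ => u ^ Y) (Y * u ^ (Y-1)) u :=
      Real.hasDerivAt_rpow_const (Or.inl (ne_of_gt hu0))
    have h2 : HasDerivAt (fun u : ℝ => -σ * u ^ Y) (-σ * (Y * u ^ (Y-1))) u := h1.const_mul (-σ)
    have h3 : HasDerivAt (fun u : ℝ => g u - 1) (g u * (-σ * (Y * u ^ (Y-1)))) u := by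
      simpa [hgdef] using (h2.exp.sub_const 1)
    have h4 := h3.div (hasDerivAt_id u) (ne_of_gt hu0)
    convert h4 using 1
    · rfl
    · rfl
    · rfl
    have e2 : u ^ (Y-1) * u = u ^ Y := by
      nth_rewrite 2 [← Real.rpow_one u]
      rw [← Real.rpow_add hu0]
      ring_nf
    have e3 : u ^ Y = u ^ (Y-2) * u ^ (2:ℕ) := by
      rw [hsq u hu0, ← Real.rpow_add hu0]
      ring_nf
    have hfu : f u = (1 - g u) / u ^ 2 := rfl
    rw [hfu]
    simp only [id_eq, mul_one]
    rw [eq_div_iff (by positivity : (u:ℝ)^2 ≠ 0), sub_mul,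
      div_mul_cancel₀ _ (by positivity : (u:ℝ)^2 ≠ 0)]
    linear_combination (σ * Y * g u) * e2 + (σ * Y * g u) * e3
  have hFint' : IntegrableOn (fun u : ℝ => f u - σ * Y * (u ^ (Y-2) * g u)) (Ioi 0) :=
    h_int.sub (hI2int.const_mul (σ * Y))
  have hFtop : Filter.Tendsto F Filter.atTop (nhds 0) := by
    apply squeeze_zero_norm' (a := fun u : ℝ => u⁻¹) ?_ tendsto_inv_atTop_zero
    filter_upwards [Filter.eventually_ge_atTop 1] with u hu
    have hu0 : (0:ℝ) < u := lt_of_lt_of_le one_pos hu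
    rw [hFdef]
    simp only
    rw [norm_div, Real.norm_eq_abs, Real.norm_eq_abs, abs_of_pos hu0, div_le_iff₀ hu0,
      inv_mul_cancel₀ (ne_of_gt hu0), abs_of_nonpos (by linarith [hexp_le_one u hu0.le])]
    have := Real.exp_pos (-σ * u ^ Y)
    rw [hgdef]; simp only; linarith
  have hFcont0 : ContinuousWithinAt F (Ici 0) 0 := by
    rw [ContinuousWithinAt, hF0]
    apply squeeze_zero_norm' (a := fun u : ℝ => σ * u ^ (Y-1)) ?_ ?_
    · filter_upwards [self_mem_nhdsWithin] with u hu
      have hu' : (0:ℝ) ≤ u := hu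
      rcases eq_or_lt_of_le hu' with h|hu0
      · rw [← h, hF0]
        simp [Real.zero_rpow (by intro h'; apply absurd h'; intro _; linarith : Y - 1 ≠ 0)]
      · rw [hFdef]
        simp only
        rw [norm_div, Real.norm_eq_abs, Real.norm_eq_abs, abs_of_pos hu0,
          abs_of_nonpos (by linarith [hexp_le_one u hu0.le]), div_le_iff₀ hu0]
        have e2 : u ^ (Y-1) * u = u ^ Y := by
          nth_rewrite 2 [← Real.rpow_one u]
          rw [← Real.rpow_add hu0]
          ring_nf
        have := hone_sub_le u
        rw [hgdef]; simp only
        nlinarith [Real.rpow_nonneg hu' (Y-1)]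
    · have hc : ContinuousAt (fun u : ℝ => u ^ (Y-1)) 0 :=
        Real.continuousAt_rpow_const 0 (Y-1) (Or.inr (by linarith))
      have h : Filter.Tendsto (fun u : ℝ => σ * u ^ (Y-1)) (nhdsWithin 0 (Ici (0:ℝ)))
          (nhds (σ * (0:ℝ) ^ (Y-1))) :=
        ((hc.tendsto).mono_left nhdsWithin_le_nhds).const_mul σ
      simpa [Real.zero_rpow (by intro h'; apply absurd h'; intro _; linarith : Y - 1 ≠ 0)] using h
  have hFTC := integral_Ioi_of_hasDerivAt_of_tendsto hFcont0 hFderiv hFint' hFtop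
  rw [hF0, zero_sub, neg_zero] at hFTC
  have hsplit : ∫ u in Ioi (0:ℝ), (f u - σ * Y * (u ^ (Y-2) * g u))
      = (∫ u in Ioi (0:ℝ), f u) - σ * Y * ∫ u in Ioi (0:ℝ), u ^ (Y-2) * g u := by
    rw [integral_sub h_int (hI2int.const_mul (σ * Y))]
    congr 1
    exact integral_const_mul (σ * Y) fun u => u ^ (Y-2) * g u
  refine ⟨h_int, ?_⟩
  have hmain : (∫ u in Ioi (0:ℝ), f u)
      = σ * Y * (σ ^ (-(Y-2+1)/Y) * (1/Y) * Real.Gamma ((Y-2+1)/Y)) := by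
    rw [hsplit] at hFTC
    have : ∫ u in Ioi (0:ℝ), u ^ (Y-2) * g u
        = σ ^ (-(Y-2+1)/Y) * (1/Y) * Real.Gamma ((Y-2+1)/Y) := hval
    rw [this] at hFTC
    linarith
  rw [hmain]
  have hY0 : Y ≠ 0 := ne_of_gt hYpos
  have hexp : σ * σ ^ (-(Y-2+1)/Y) = σ ^ ((1:ℝ)/Y) := by
    nth_rewrite 1 [← Real.rpow_one σ]
    rw [← Real.rpow_add hσ]
    congr 1
    field_simp
    ring
  have hgam : (Y-2+1)/Y = 1 - 1/Y := by
    field_simp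
    ring
  rw [hgam, ← hexp]
  field_simp
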